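/- Let R > 0, let V : ℝ³ → ℝ be integrable, spherically symmetric (V(x) depends only on |x|), and supported in the closed ball of radius R centered at the origin. Let f : ℝ³ → ℝ be twice continuously differentiable, spherically symmetric, bounded, satisfy the zero-energy scattering equation −Δf(x) + (1/2)V(x)f(x) = 0 for all x ∈ ℝ³, and satisfy f(x) → 1 as |x| → ∞. Then for every x with |x| > R one has f(x) = 1 − a₀/|x|, where a₀ := (8π)⁻¹ ∫ f(x)V(x) dx is the scattering length of V. -/

import Mathlib

open MeasureTheory Filter Real

/-- The Laplacian of a function on ℝ³ (as `EuclideanSpace ℝ (Fin 3)`):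
`Δf = ∑ i, ∂²f/∂xᵢ²`. -/
noncomputable def laplacian (f : EuclideanSpace ℝ (Fin 3) → ℝ)
    (x : EuclideanSpace ℝ (Fin 3)) : ℝ :=
  ∑ i : Fin 3,
    fderiv ℝ (fun y => fderiv ℝ f y (EuclideanSpace.single i 1)) x
      (EuclideanSpace.single i 1)

lemma hasFDerivAt_norm' {F : Type*} [NormedAddCommGroup F] [InnerProductSpace ℝ F]
    {x : F} (hx : x ≠ 0) :
    HasFDerivAt (fun y : F => ‖y‖) (‖x‖⁻¹ • innerSL ℝ x) x := by
  have h1 : HasFDerivAt (fun y : F => ‖y‖ ^ 2) (2 • innerSL ℝ x) x :=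
    (hasStrictFDerivAt_norm_sq x).hasFDerivAt
  have hx' : (0:ℝ) < ‖x‖ := norm_pos_iff.2 hx
  have h2 : HasDerivAt Real.sqrt (1 / (2 * Real.sqrt (‖x‖ ^ 2))) (‖x‖ ^ 2) :=
    Real.hasDerivAt_sqrt (by positivity)
  have h3 := h2.comp_hasFDerivAt x h1
  have hs : Real.sqrt (‖x‖ ^ 2) = ‖x‖ := Real.sqrt_sq (norm_nonneg x)
  have he : (Real.sqrt ∘ fun y : F => ‖y‖ ^ 2) = fun y : F => ‖y‖ := by
    funext y; exact Real.sqrt_sq (norm_nonneg y)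
  rw [he, hs] at h3
  refine h3.congr_fderiv ?_
  ext v
  simp only [ContinuousLinearMap.coe_smul', Pi.smul_apply, smul_eq_mul,
    ContinuousLinearMap.smul_apply]
  field_simp
  rw [nsmul_eq_mul, Nat.cast_ofNat]

lemma deriv_contDiff_one {g : ℝ → ℝ} (hg : ContDiff ℝ 2 g) : ContDiff ℝ 1 (deriv g) := by
  have := (contDiff_succ_iff_deriv (n := 1)).mp (by exact_mod_cast hg)
  exact this.2.2

lemma fderiv_radial (g : ℝ → ℝ) (hg : ContDiff ℝ 2 g)
    {x : EuclideanSpace ℝ (Fin 3)} (hx : x ≠ 0) :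
    HasFDerivAt (fun y : EuclideanSpace ℝ (Fin 3) => g ‖y‖)
      (deriv g ‖x‖ • (‖x‖⁻¹ • innerSL ℝ x)) x := by
  have hd : HasDerivAt g (deriv g ‖x‖) ‖x‖ :=
    ((hg.differentiable (by norm_num)) ‖x‖).hasDerivAt
  exact hd.comp_hasFDerivAt x (hasFDerivAt_norm' hx)

lemma fderiv_radial_apply (g : ℝ → ℝ) (hg : ContDiff ℝ 2 g)
    {x : EuclideanSpace ℝ (Fin 3)} (hx : x ≠ 0) (i : Fin 3) :
    fderiv ℝ (fun y : EuclideanSpace ℝ (Fin 3) => g ‖y‖) x (EuclideanSpace.single i 1)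
      = deriv g ‖x‖ * (‖x‖⁻¹ * x i) := by
  rw [(fderiv_radial g hg hx).fderiv]
  simp [EuclideanSpace.inner_single_right]

lemma hessian_radial (g : ℝ → ℝ) (hg : ContDiff ℝ 2 g)
    {x : EuclideanSpace ℝ (Fin 3)} (hx : x ≠ 0) (i : Fin 3) :
    fderiv ℝ (fun y => fderiv ℝ (fun z : EuclideanSpace ℝ (Fin 3) => g ‖z‖) y
        (EuclideanSpace.single i 1)) x (EuclideanSpace.single i 1)
      = deriv (deriv g) ‖x‖ * (‖x‖⁻¹ * x i) * (‖x‖⁻¹ * x i)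
        + deriv g ‖x‖ * (‖x‖⁻¹ - x i * ((‖x‖ ^ 2)⁻¹ * (‖x‖⁻¹ * x i))) := by
  set r := ‖x‖ with hr
  have hr0 : (0:ℝ) < r := norm_pos_iff.2 hx
  -- the function φ agreeing with the first derivative away from 0
  set φ : EuclideanSpace ℝ (Fin 3) → ℝ := fun y => deriv g ‖y‖ * (‖y‖⁻¹ * y i) with hφ
  have heq : (fun y => fderiv ℝ (fun z : EuclideanSpace ℝ (Fin 3) => g ‖z‖) y
      (EuclideanSpace.single i 1)) =ᶠ[nhds x] φ := by
    filter_upwards [IsOpen.mem_nhds isOpen_compl_singleton hx] with y hy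
    exact fderiv_radial_apply g hg hy i
  rw [heq.fderiv_eq]
  -- now compute the derivative of φ at x
  have hnorm := hasFDerivAt_norm' hx
  have hdg : HasDerivAt (deriv g) (deriv (deriv g) r) r :=
    (((deriv_contDiff_one hg).differentiable (by norm_num)) r).hasDerivAt
  have h1 : HasFDerivAt (fun y : EuclideanSpace ℝ (Fin 3) => deriv g ‖y‖)
      (deriv (deriv g) r • (r⁻¹ • innerSL ℝ x)) x := by
    have := hdg.comp_hasFDerivAt x hnorm; exact this
  have hinv : HasDerivAt (fun s : ℝ => s⁻¹) (-(r ^ 2)⁻¹) r := hasDerivAt_inv hr0.ne'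
  have h2 : HasFDerivAt (fun y : EuclideanSpace ℝ (Fin 3) => ‖y‖⁻¹)
      ((-(r ^ 2)⁻¹) • (r⁻¹ • innerSL ℝ x)) x := hinv.comp_hasFDerivAt x hnorm
  have h3 : HasFDerivAt (fun y : EuclideanSpace ℝ (Fin 3) => y i)
      (EuclideanSpace.proj i : EuclideanSpace ℝ (Fin 3) →L[ℝ] ℝ) x :=
    (EuclideanSpace.proj i : EuclideanSpace ℝ (Fin 3) →L[ℝ] ℝ).hasFDerivAt
  have h23 : HasFDerivAt (fun y : EuclideanSpace ℝ (Fin 3) => ‖y‖⁻¹ * y i)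
      (r⁻¹ • (EuclideanSpace.proj i : EuclideanSpace ℝ (Fin 3) →L[ℝ] ℝ)
        + (x i) • ((-(r ^ 2)⁻¹) • (r⁻¹ • innerSL ℝ x))) x := h2.mul h3
  have h := h1.mul h23
  rw [(show HasFDerivAt φ _ x from h).fderiv]
  have e1 : (innerSL ℝ x) (EuclideanSpace.single i 1) = x i := by
    simp [EuclideanSpace.inner_single_right]
  have e2 : (EuclideanSpace.proj i : EuclideanSpace ℝ (Fin 3) →L[ℝ] ℝ)
      (EuclideanSpace.single i 1) = 1 := by
    simp [EuclideanSpace.single_apply]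
  simp only [ContinuousLinearMap.add_apply, ContinuousLinearMap.smul_apply, smul_eq_mul, e1, e2]
  ring

lemma laplacian_radial (g : ℝ → ℝ) (hg : ContDiff ℝ 2 g)
    {x : EuclideanSpace ℝ (Fin 3)} (hx : x ≠ 0) :
    laplacian (fun y => g ‖y‖) x = deriv (deriv g) ‖x‖ + 2 * deriv g ‖x‖ / ‖x‖ := by
  have hr0 : (0:ℝ) < ‖x‖ := norm_pos_iff.2 hx
  have hS : ∑ i : Fin 3, x i ^ 2 = ‖x‖ ^ 2 := by
    rw [EuclideanSpace.norm_eq]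
    rw [Real.sq_sqrt (by positivity)]
    exact Finset.sum_congr rfl fun i _ => (sq_abs (x i)).symm
  unfold laplacian
  have : ∀ i : Fin 3, fderiv ℝ (fun y => fderiv ℝ (fun z : EuclideanSpace ℝ (Fin 3) => g ‖z‖) y
        (EuclideanSpace.single i 1)) x (EuclideanSpace.single i 1)
      = deriv (deriv g) ‖x‖ * (‖x‖⁻¹ * x i) * (‖x‖⁻¹ * x i)
        + deriv g ‖x‖ * (‖x‖⁻¹ - x i * ((‖x‖ ^ 2)⁻¹ * (‖x‖⁻¹ * x i))) :=
    fun i => hessian_radial g hg hx i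
  rw [Finset.sum_congr rfl fun i _ => this i]
  have expand : ∀ i : Fin 3, deriv (deriv g) ‖x‖ * (‖x‖⁻¹ * x i) * (‖x‖⁻¹ * x i)
        + deriv g ‖x‖ * (‖x‖⁻¹ - x i * ((‖x‖ ^ 2)⁻¹ * (‖x‖⁻¹ * x i)))
      = (deriv (deriv g) ‖x‖ * ‖x‖⁻¹ ^ 2 - deriv g ‖x‖ * ‖x‖⁻¹ ^ 3) * x i ^ 2
        + deriv g ‖x‖ * ‖x‖⁻¹ := by
    intro i
    field_simp
    ring
  rw [Finset.sum_congr rfl fun i _ => expand i]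
  rw [Finset.sum_add_distrib, ← Finset.mul_sum, hS]
  rw [Finset.sum_const]
  simp only [Finset.card_univ, Fintype.card_fin, nsmul_eq_mul]
  field_simp
  ring

lemma volume_unit_ball_3 :
    (volume (Metric.ball (0 : EuclideanSpace ℝ (Fin 3)) 1)).toReal = 4 / 3 * π := by
  rw [EuclideanSpace.volume_ball]
  have hgamma : Real.Gamma ((Fintype.card (Fin 3)) / 2 + 1) = 3 / 4 * Real.sqrt π := by
    have h32 : ((Fintype.card (Fin 3) : ℝ)) / 2 + 1 = 3 / 2 + 1 := by
      simp [Fintype.card_fin]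
    rw [h32, Real.Gamma_add_one (by norm_num)]
    have : (3:ℝ)/2 = 1/2 + 1 := by norm_num
    rw [this, Real.Gamma_add_one (by norm_num), Real.Gamma_one_half_eq]
    ring
  rw [hgamma]
  have hs : Real.sqrt π ^ Fintype.card (Fin 3) = π * Real.sqrt π := by
    simp only [Fintype.card_fin]
    rw [pow_succ, Real.sq_sqrt Real.pi_nonneg]
  rw [hs]
  have hsp : (0:ℝ) < Real.sqrt π := Real.sqrt_pos.2 Real.pi_pos
  rw [ENNReal.ofReal_one, one_pow, one_mul, ENNReal.toReal_ofReal (by positivity)]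
  field_simp

lemma polar3 (h : ℝ → ℝ) :
    ∫ x : EuclideanSpace ℝ (Fin 3), h ‖x‖
      = (4 * π) * ∫ r in Set.Ioi (0:ℝ), r ^ 2 * h r := by
  rw [integral_fun_norm_addHaar volume h]
  have hdim : Module.finrank ℝ (EuclideanSpace ℝ (Fin 3)) = 3 := by
    simp [finrank_euclideanSpace]
  rw [hdim, Measure.real_def, volume_unit_ball_3]
  simp only [nsmul_eq_mul, smul_eq_mul]
  rw [show (3:ℕ) - 1 = 2 from rfl]
  push_cast
  ring

/-- If `V` is integrable, spherically symmetric and supported in the closed ball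
of radius `R`, and `f` is a bounded, spherically symmetric C² solution of the
zero-energy scattering equation `-Δf + (1/2) V f = 0` with `f(x) → 1` as
`|x| → ∞`, then outside the support of `V` one has `f(x) = 1 - a₀/|x|`, where
`a₀ = (8π)⁻¹ ∫ f V` is the scattering length of `V`. -/
theorem scattering_solution_outside_support
    (R : ℝ) (hR : 0 < R)
    (V : EuclideanSpace ℝ (Fin 3) → ℝ)
    (hV_int : Integrable V)
    (hV_sym : ∀ x y : EuclideanSpace ℝ (Fin 3), ‖x‖ = ‖y‖ → V x = V y)
    (hV_supp : ∀ x : EuclideanSpace ℝ (Fin 3), R < ‖x‖ → V x = 0)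
    (f : EuclideanSpace ℝ (Fin 3) → ℝ)
    (hf_smooth : ContDiff ℝ 2 f)
    (hf_sym : ∀ x y : EuclideanSpace ℝ (Fin 3), ‖x‖ = ‖y‖ → f x = f y)
    (hf_bdd : ∃ M : ℝ, ∀ x, |f x| ≤ M)
    (hscat : ∀ x, -laplacian f x + (1 / 2) * V x * f x = 0)
    (hf_infty : Tendsto f (cocompact (EuclideanSpace ℝ (Fin 3))) (nhds 1))
    (a₀ : ℝ) (ha₀ : a₀ = (8 * π)⁻¹ * ∫ x, f x * V x) :
    ∀ x : EuclideanSpace ℝ (Fin 3), R < ‖x‖ → f x = 1 - a₀ / ‖x‖ := by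
  classical
  set e : EuclideanSpace ℝ (Fin 3) := EuclideanSpace.single 0 1 with he
  have hnorme : ‖e‖ = 1 := by simp [he]
  have hge : ∀ r : ℝ, 0 ≤ r → ‖r • e‖ = r := by
    intro r hr; rw [norm_smul, hnorme, mul_one, Real.norm_eq_abs, abs_of_nonneg hr]
  set g : ℝ → ℝ := fun r => f (r • e) with hgdef
  set W : ℝ → ℝ := fun r => V (r • e) with hWdef
  have hfg : ∀ y, f y = g ‖y‖ := fun y =>
    hf_sym y (‖y‖ • e) (by rw [hge _ (norm_nonneg y)])
  have hVW : ∀ y, V y = W ‖y‖ := fun y =>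
    hV_sym y (‖y‖ • e) (by rw [hge _ (norm_nonneg y)])
  have hfE : f = fun y => g ‖y‖ := funext hfg
  have hg : ContDiff ℝ 2 g := hf_smooth.comp (contDiff_id.smul contDiff_const)
  have hgdiff : Differentiable ℝ g := hg.differentiable (by norm_num)
  have hg'cd : ContDiff ℝ 1 (deriv g) := deriv_contDiff_one hg
  have hg'diff : Differentiable ℝ (deriv g) := hg'cd.differentiable (by norm_num)
  have hg''cont : Continuous (deriv (deriv g)) := by
    have := (contDiff_succ_iff_deriv (n := 0)).mp (by exact_mod_cast hg'cd)
    exact this.2.2.continuous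
  have hg'cont : Continuous (deriv g) := hg'diff.continuous
  have hgcont : Continuous g := hgdiff.continuous
  -- radial PDE
  have hPDE : ∀ r : ℝ, 0 < r →
      deriv (deriv g) r + 2 * deriv g r / r = 1 / 2 * W r * g r := by
    intro r hr
    have hx0 : (r • e) ≠ 0 := by
      intro h
      have := hge r hr.le
      rw [h, norm_zero] at this; exact hr.ne this
    have h1 := hscat (r • e)
    have h2 : laplacian f (r • e) = deriv (deriv g) ‖r • e‖ + 2 * deriv g ‖r • e‖ / ‖r • e‖ := by
      rw [hfE]; exact laplacian_radial g hg hx0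
    rw [hge r hr.le] at h2
    have h3 : V (r • e) = W r := rfl
    have h4 : f (r • e) = g r := rfl
    rw [h2, h3, h4] at h1
    linarith
  -- u and its derivatives
  set u : ℝ → ℝ := fun r => r * g r with hudef
  set u1 : ℝ → ℝ := fun r => g r + r * deriv g r with hu1def
  set u2 : ℝ → ℝ := fun r => 2 * deriv g r + r * deriv (deriv g) r with hu2def
  have hu1 : ∀ r, HasDerivAt u (u1 r) r := by
    intro r
    have := (hasDerivAt_id r).mul (hgdiff r).hasDerivAt
    refine this.congr_deriv ?_
    simp [hu1def]; (try ring)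
  have hu2 : ∀ r, HasDerivAt u1 (u2 r) r := by
    intro r
    have := ((hgdiff r).hasDerivAt).add ((hasDerivAt_id r).mul (hg'diff r).hasDerivAt)
    refine this.congr_deriv ?_
    simp [hu2def]; ring
  have hu1cont : Continuous u1 := by
    exact hgcont.add (continuous_id.mul hg'cont)
  have hu2cont : Continuous u2 := by
    exact (continuous_const.mul hg'cont).add (continuous_id.mul hg''cont)
  have hucont : Continuous u := continuous_id.mul hgcont
  -- relation r * u2 r = r^2 * (1/2 W g)
  have hru2 : ∀ r : ℝ, 0 < r → r * u2 r = r ^ 2 * (1 / 2 * W r * g r) := by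
    intro r hr
    have := hPDE r hr
    have h2 : r ^ 2 * (deriv (deriv g) r + 2 * deriv g r / r) = r * u2 r := by
      field_simp [hu2def]; ring
    rw [← this, h2.symm]
  -- u2 vanishes beyond R
  have hu2supp : ∀ r : ℝ, R < r → u2 r = 0 := by
    intro r hr
    have hr0 : (0:ℝ) < r := hR.trans hr
    have hW0 : W r = 0 := hV_supp (r • e) (by rw [hge r hr0.le]; exact hr)
    have := hru2 r hr0
    rw [hW0] at this
    simp at this
    rcases this with h | h
    · exact absurd h hr0.ne'
    · exact h
  -- FTC consequences on (R, ∞)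
  have key1 : ∀ a b : ℝ, R < a → a ≤ b → u1 b = u1 a := by
    intro a b ha hab
    have h := intervalIntegral.integral_eq_sub_of_hasDerivAt (f := u1)
      (fun t _ => hu2 t) (hu2cont.intervalIntegrable a b)
    have hz : (∫ s in a..b, u2 s) = 0 := by
      rw [intervalIntegral.integral_of_le hab]
      apply setIntegral_eq_zero_of_forall_eq_zero
      intro s hs
      exact hu2supp s (ha.trans_le hs.1.le)
    rw [hz] at h
    linarith
  set c : ℝ := u1 (R + 1) with hcdef
  have hu1c : ∀ s : ℝ, R < s → u1 s = c := by
    intro s hs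
    rcases le_total s (R + 1) with h | h
    · exact (key1 s (R + 1) hs h).symm
    · exact key1 (R + 1) s (by linarith) h
  have key2 : ∀ a b : ℝ, R < a → a ≤ b → u b = u a + c * (b - a) := by
    intro a b ha hab
    have h := intervalIntegral.integral_eq_sub_of_hasDerivAt (f := u)
      (fun t _ => hu1 t) (hu1cont.intervalIntegrable a b)
    have hz : (∫ s in a..b, u1 s) = c * (b - a) := by
      have : (∫ s in a..b, u1 s) = ∫ s in a..b, c := by
        apply intervalIntegral.integral_congr
        intro s hs
        rw [Set.uIcc_of_le hab] at hs
        exact hu1c s (ha.trans_le hs.1)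
      rw [this, intervalIntegral.integral_const]
      simp [mul_comm]
    rw [hz] at h
    linarith
  set d : ℝ := u (R + 1) - c * (R + 1) with hddef
  have hucd : ∀ s : ℝ, R < s → u s = c * s + d := by
    intro s hs
    rcases le_total s (R + 1) with h | h
    · have := key2 s (R + 1) hs h
      rw [hddef]; linarith
    · have := key2 (R + 1) s (by linarith) h
      rw [hddef]; linarith
  -- c = 1 via the limit at infinity
  have htend_e : Tendsto (fun r : ℝ => r • e) atTop (cocompact (EuclideanSpace ℝ (Fin 3))) := by
    rw [hasBasis_cocompact.tendsto_right_iff]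
    intro K hK
    obtain ⟨C, hC⟩ := hK.isBounded.subset_closedBall 0
    filter_upwards [eventually_gt_atTop (max C 0)] with r hr
    intro hmem
    have : ‖r • e‖ ≤ C := by simpa using hC hmem
    rw [hge r (le_of_lt (lt_of_le_of_lt (le_max_right C 0) hr))] at this
    exact absurd this (not_le.2 (lt_of_le_of_lt (le_max_left C 0) hr))
  have hg_lim1 : Tendsto g atTop (nhds 1) := hf_infty.comp htend_e
  have hg_limc : Tendsto g atTop (nhds c) := by
    have h1 : Tendsto (fun s : ℝ => c + d * s⁻¹) atTop (nhds (c + d * 0)) :=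
      tendsto_const_nhds.add (tendsto_const_nhds.mul tendsto_inv_atTop_zero)
    rw [mul_zero, add_zero] at h1
    apply h1.congr'
    filter_upwards [eventually_gt_atTop (max R 0)] with s hs
    have hsR : R < s := lt_of_le_of_lt (le_max_left R 0) hs
    have hs0 : (0:ℝ) < s := lt_of_le_of_lt (le_max_right R 0) hs
    have := hucd s hsR
    have hgs : g s = u s / s := by
      rw [hudef]; field_simp
    rw [hgs, this]; field_simp; (try ring)
  have hc1 : c = 1 := tendsto_nhds_unique hg_limc hg_lim1
  -- compute u1 R and u R by continuity from the right
  have hu1R : u1 R = c := by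
    have h1 : Tendsto u1 (nhdsWithin R (Set.Ioi R)) (nhds (u1 R)) :=
      (hu1cont.continuousAt).continuousWithinAt.tendsto
    have h2 : Tendsto u1 (nhdsWithin R (Set.Ioi R)) (nhds c) := by
      apply tendsto_const_nhds.congr'
      filter_upwards [eventually_mem_nhdsWithin] with s hs
      exact (hu1c s hs).symm
    exact tendsto_nhds_unique h1 h2
  have huR : u R = c * R + d := by
    have h1 : Tendsto u (nhdsWithin R (Set.Ioi R)) (nhds (u R)) :=
      (hucont.continuousAt).continuousWithinAt.tendsto
    have h2 : Tendsto u (nhdsWithin R (Set.Ioi R)) (nhds (c * R + d)) := by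
      have hcont : Continuous (fun s : ℝ => c * s + d) :=
        (continuous_const.mul continuous_id).add continuous_const
      have h3 : Tendsto (fun s : ℝ => c * s + d) (nhdsWithin R (Set.Ioi R)) (nhds (c * R + d)) :=
        hcont.continuousAt.continuousWithinAt.tendsto
      apply h3.congr'
      filter_upwards [eventually_mem_nhdsWithin] with s hs
      exact (hucd s hs).symm
    exact tendsto_nhds_unique h1 h2
  -- the integral
  have hint : (∫ x, f x * V x) = -(8 * π * d) := by
    have h1 : (∫ x, f x * V x)
        = (4 * π) * ∫ r in Set.Ioi (0:ℝ), r ^ 2 * (g r * W r) := by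
      rw [← polar3 (fun r => g r * W r)]
      congr 1; funext y; rw [hfg y, hVW y]
    have h2 : (∫ r in Set.Ioi (0:ℝ), r ^ 2 * (g r * W r))
        = ∫ r in Set.Ioi (0:ℝ), 2 * (r * u2 r) := by
      apply setIntegral_congr_fun measurableSet_Ioi
      intro r hr
      have hr0 : (0:ℝ) < r := hr
      have hh := hru2 r hr0
      show r ^ 2 * (g r * W r) = 2 * (r * u2 r)
      have : r ^ 2 * (g r * W r) = 2 * (r ^ 2 * (1 / 2 * W r * g r)) := by ring
      rw [this, ← hh]
    have hIoc : IntegrableOn (fun r => 2 * (r * u2 r)) (Set.Ioc 0 R) := by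
      apply Continuous.integrableOn_Ioc
      exact continuous_const.mul (continuous_id.mul hu2cont)
    have hIoiR : IntegrableOn (fun r => 2 * (r * u2 r)) (Set.Ioi R) := by
      apply (integrableOn_congr_fun _ measurableSet_Ioi).mpr (integrableOn_zero)
      intro r hr
      show 2 * (r * u2 r) = 0
      rw [hu2supp r hr]; ring
    have hsplit : (∫ r in Set.Ioi (0:ℝ), 2 * (r * u2 r))
        = (∫ r in Set.Ioc 0 R, 2 * (r * u2 r)) + ∫ r in Set.Ioi R, 2 * (r * u2 r) := by
      rw [← setIntegral_union (Set.Ioc_disjoint_Ioi le_rfl) measurableSet_Ioi hIoc hIoiR]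
      rw [Set.Ioc_union_Ioi_eq_Ioi hR.le]
    have hIoiR0 : (∫ r in Set.Ioi R, 2 * (r * u2 r)) = 0 := by
      apply setIntegral_eq_zero_of_forall_eq_zero
      intro r hr
      show 2 * (r * u2 r) = 0
      rw [hu2supp r hr]; ring
    have hFTC : (∫ r in Set.Ioc 0 R, 2 * (r * u2 r)) = 2 * -d := by
      have heq : (∫ r in Set.Ioc 0 R, 2 * (r * u2 r))
          = ∫ r in (0:ℝ)..R, 2 * (r * u2 r) := (intervalIntegral.integral_of_le hR.le).symm
      rw [heq]
      have hF : ∀ t ∈ Set.uIcc (0:ℝ) R, HasDerivAt (fun s => 2 * (s * u1 s - u s))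
          (2 * (t * u2 t)) t := by
        intro t _
        have h := (((hasDerivAt_id t).mul (hu2 t)).sub (hu1 t)).const_mul (2:ℝ)
        refine h.congr_deriv ?_
        simp only [hu1def, id]
        ring
      rw [intervalIntegral.integral_eq_sub_of_hasDerivAt hF
        ((continuous_const.mul (continuous_id.mul hu2cont)).intervalIntegrable 0 R)]
      have hu0 : u 0 = 0 := by simp [hudef]
      rw [hu1R, huR, hu0, hc1]
      ring
    rw [h1, h2, hsplit, hIoiR0, hFTC]
    ring
  -- conclusion
  intro x hx
  have hx0 : (0:ℝ) < ‖x‖ := hR.trans hx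
  have ha : a₀ = -d := by
    rw [ha₀, hint]
    have h8 : (8 * π) ≠ 0 := by positivity
    field_simp
  have hu := hucd ‖x‖ hx
  rw [hc1, one_mul] at hu
  have hgx : g ‖x‖ = 1 + d / ‖x‖ := by
    have : ‖x‖ * g ‖x‖ = ‖x‖ + d := hu
    field_simp
    linarith [this]
  rw [hfg x, hgx, ha]
  ring
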